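/- Let n be a non-square natural number with v_2(n) ≥ 0 even. Then D_{S(n)*} = C_{S(n)*} = 3. -/

import Mathlib

/-- The set of squares of units of `ZMod n`. -/
def unitSquares (n : ℕ) : Set (ZMod n) :=
  {x | ∃ u : (ZMod n)ˣ, (u : ZMod n) ^ 2 = x}

/-- The set of nonzero squares of `ZMod n`. -/
def nonzeroSquares (n : ℕ) : Set (ZMod n) :=
  {x | x ≠ 0 ∧ ∃ y : ZMod n, y ^ 2 = x}

/-- A (nonempty) sequence is an `A`-weighted zero-sum sequence. -/
def IsWeightedZeroSum {n k : ℕ} (A : Set (ZMod n)) (x : Fin k → ZMod n) : Prop :=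
  0 < k ∧ ∃ w : Fin k → ZMod n, (∀ i, w i ∈ A) ∧ ∑ i, w i * x i = 0

/-- The sequence `x` has an `A`-weighted zero-sum subsequence. -/
def HasWZSSubseq {n k : ℕ} (A : Set (ZMod n)) (x : Fin k → ZMod n) : Prop :=
  ∃ I : Finset (Fin k), I.Nonempty ∧ ∃ w : Fin k → ZMod n,
    (∀ i ∈ I, w i ∈ A) ∧ ∑ i ∈ I, w i * x i = 0

/-- The sequence `x` has an `A`-weighted zero-sum subsequence of consecutive terms. -/
def HasConsecWZS {n k : ℕ} (A : Set (ZMod n)) (x : Fin k → ZMod n) : Prop :=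
  ∃ i j : Fin k, i ≤ j ∧ ∃ w : Fin k → ZMod n,
    (∀ t ∈ Finset.Icc i j, w t ∈ A) ∧ ∑ t ∈ Finset.Icc i j, w t * x t = 0

/-- `k` is admissible for the `A`-weighted Davenport constant of `ZMod n`. -/
def DConst (n : ℕ) (A : Set (ZMod n)) (k : ℕ) : Prop :=
  0 < k ∧ ∀ x : Fin k → ZMod n, HasWZSSubseq A x

/-- `k` is admissible for the constant `C_A` of `ZMod n`. -/
def CConst (n : ℕ) (A : Set (ZMod n)) (k : ℕ) : Prop :=
  0 < k ∧ ∀ x : Fin k → ZMod n, HasConsecWZS A x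


lemma exists_odd_prime_odd_fact (n : ℕ) (hn : 0 < n) (hns : ¬ IsSquare n)
    (hv : Even (n.factorization 2)) : ∃ p, p.Prime ∧ p ≠ 2 ∧ Odd (n.factorization p) := by
  by_contra h
  push_neg at h
  apply hns
  have he : ∀ p, Even (n.factorization p) := by
    intro p
    by_cases hp : p.Prime
    · by_cases hp2 : p = 2
      · subst hp2; exact hv
      · exact Nat.not_odd_iff_even.mp (h p hp hp2)
    · simp [Nat.factorization_eq_zero_of_not_prime n hp]
  refine ⟨n.factorization.prod fun p e => p ^ (e / 2), ?_⟩
  conv_lhs => rw [← Nat.factorization_prod_pow_eq_self hn.ne']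
  rw [← Finsupp.prod_mul]
  apply Finsupp.prod_congr
  intro p hp
  rw [← pow_add]
  congr 1
  obtain ⟨k, hk⟩ := he p
  omega

lemma units_isSquare_of_map {p e : ℕ} (hp : p.Prime) (hp2 : p ≠ 2) (he : 0 < e)
    (u : (ZMod (p^e))ˣ)
    (hs : IsSquare (ZMod.unitsMap (dvd_pow_self p he.ne') u)) : IsSquare u := by
  haveI : Fact p.Prime := ⟨hp⟩
  haveI : NeZero (p ^ e) := ⟨pow_ne_zero e hp.pos.ne'⟩
  set π := ZMod.unitsMap (dvd_pow_self p he.ne') with hπ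
  obtain ⟨v, hv⟩ := hs
  obtain ⟨w, hw⟩ := ZMod.unitsMap_surjective (dvd_pow_self p he.ne') v
  set x := u * (w * w)⁻¹ with hxdef
  have hx : x ∈ π.ker := by
    rw [MonoidHom.mem_ker]
    simp only [hxdef, map_mul, map_inv, hw, hv]
    rw [hπ, hw]
    group
  have hcardG : Nat.card (ZMod (p^e))ˣ = p^(e-1) * (p - 1) := by
    rw [Nat.card_eq_fintype_card, ZMod.card_units_eq_totient, Nat.totient_prime_pow hp he]
  have hcardH : Nat.card (ZMod p)ˣ = p - 1 := by
    rw [Nat.card_eq_fintype_card, ZMod.card_units_eq_totient, Nat.totient_prime hp]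
  have hquot : Nat.card ((ZMod (p^e))ˣ ⧸ π.ker) = p - 1 := by
    rw [Nat.card_congr (QuotientGroup.quotientKerEquivOfSurjective π
      (ZMod.unitsMap_surjective _)).toEquiv, hcardH]
  have hcardK : Nat.card π.ker = p ^ (e-1) := by
    have h1 := Subgroup.card_eq_card_quotient_mul_card_subgroup π.ker
    rw [hcardG, hquot] at h1
    have hp1 : 0 < p - 1 := by have := hp.two_le; omega
    exact (Nat.eq_of_mul_eq_mul_left hp1 (by linarith [h1])).symm
  have hodd : Odd (Nat.card π.ker) := by
    rw [hcardK]
    exact (hp.odd_of_ne_two hp2).pow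
  have hx1 : x ^ Nat.card π.ker = 1 := by
    have h2 : (⟨x, hx⟩ : π.ker) ^ Nat.card π.ker = 1 := pow_card_eq_one'
    have := congrArg (Subtype.val) h2
    simpa using this
  obtain ⟨k, hk⟩ := hodd
  refine ⟨w * x ^ (k+1), ?_⟩
  have hu : u = (w * x ^ (k+1)) * (w * x ^ (k+1)) := by
    have : u = w * w * x := by
      rw [hxdef, mul_comm u, ← mul_assoc, mul_inv_cancel, one_mul]
    rw [this]
    have : x ^ (k+1) * x ^ (k+1) = x := by
      rw [← pow_add]
      have : k + 1 + (k + 1) = Nat.card π.ker + 1 := by omega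
      rw [this, pow_succ, hx1, one_mul]
    calc w * w * x = w * w * (x ^ (k+1) * x ^ (k+1)) := by rw [this]
      _ = w * x ^ (k+1) * (w * x ^ (k+1)) := by
          simp [mul_comm, mul_assoc, mul_left_comm]
  exact hu

lemma isSquare_of_isSquare_cast {p e : ℕ} (hp : p.Prime) (hp2 : p ≠ 2) (he : 0 < e)
    (α : ZMod (p^e)) (hu : IsUnit α)
    (hs : IsSquare ((ZMod.castHom (dvd_pow_self p he.ne') (ZMod p)) α)) : IsSquare α := by
  obtain ⟨u, rfl⟩ := hu
  have hcoe : ((ZMod.unitsMap (dvd_pow_self p he.ne') u : (ZMod p)ˣ) : ZMod p)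
      = (ZMod.castHom (dvd_pow_self p he.ne') (ZMod p)) (u : ZMod (p^e)) := by
    rw [ZMod.unitsMap_def]
    rfl
  obtain ⟨b, hb⟩ := hs
  have hbu : IsUnit b := by
    have : IsUnit (b * b) := by
      rw [← hb, ← hcoe]
      exact (ZMod.unitsMap (dvd_pow_self p he.ne') u).isUnit
    exact isUnit_of_mul_isUnit_left this
  have hsq : IsSquare (ZMod.unitsMap (dvd_pow_self p he.ne') u) := by
    refine ⟨hbu.unit, Units.ext ?_⟩
    rw [hcoe, hb]
    simp
  obtain ⟨w, hw⟩ := units_isSquare_of_map hp hp2 he u hsq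
  exact ⟨(w : ZMod (p^e)), by rw [hw]; simp⟩

lemma exists_nonsquare_sum_of_squares (p : ℕ) (hp : p.Prime) (hp2 : p ≠ 2) :
    ∃ x y : ZMod p, IsSquare x ∧ IsSquare y ∧ x ≠ 0 ∧ y ≠ 0 ∧ ¬ IsSquare (x + y) := by
  haveI : Fact p.Prime := ⟨hp⟩
  by_contra h
  push_neg at h
  have hall : ∀ m : ℕ, IsSquare ((m : ZMod p)) := by
    intro m
    induction m with
    | zero => exact ⟨0, by simp⟩
    | succ m ih =>
      by_cases hm : (m : ZMod p) = 0
      · push_cast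
        rw [hm, zero_add]
        exact ⟨1, by simp⟩
      · push_cast
        exact h _ 1 ih IsSquare.one hm one_ne_zero
  obtain ⟨z, hz⟩ := FiniteField.exists_nonsquare
    (F := ZMod p) (by rw [ZMod.ringChar_zmod_n]; exact hp2)
  exact hz (by simpa using hall z.val)

lemma core_modp (p : ℕ) (hp : p.Prime) (hp2 : p ≠ 2) (a b c : ZMod p)
    (ha : a ≠ 0) (hb : b ≠ 0) (hc : c ≠ 0)
    (hab : ¬ IsSquare (-(a*b))) (hbc : ¬ IsSquare (-(b*c))) :
    ∃ s t u : ZMod p, s ≠ 0 ∧ t ≠ 0 ∧ u ≠ 0 ∧ IsSquare s ∧ IsSquare t ∧ IsSquare u ∧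
      s*a + t*b + u*c = 0 := by
  haveI : Fact p.Prime := ⟨hp⟩
  set β := b * a⁻¹ with hβ
  set γ := c * a⁻¹ with hγ
  have ha' : a⁻¹ ≠ 0 := inv_ne_zero ha
  have hβ0 : β ≠ 0 := mul_ne_zero hb ha'
  have hγ0 : γ ≠ 0 := mul_ne_zero hc ha'
  -- -β is not a square
  have hnβ : ¬ IsSquare (-β) := by
    intro ⟨r, hr⟩
    apply hab
    refine ⟨r * a, ?_⟩
    have hba : (-β) * a * a = -(a*b) := by
      rw [hβ]
      calc -(b*a⁻¹) * a * a = -(b * (a⁻¹ * a) * a) := by ring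
        _ = -(a*b) := by rw [inv_mul_cancel₀ ha]; ring
    rw [← hba, hr]
    ring
  -- γ is a square
  have hγsq : IsSquare γ := by
    have h1 : quadraticChar (ZMod p) (-(a*b)) = -1 :=
      quadraticChar_neg_one_iff_not_isSquare.mpr hab
    have h2 : quadraticChar (ZMod p) (-(b*c)) = -1 :=
      quadraticChar_neg_one_iff_not_isSquare.mpr hbc
    have h3 : quadraticChar (ZMod p) ((-(a*b)) * (-(b*c))) = 1 := by
      rw [map_mul, h1, h2]; ring
    have h4 : (-(a*b)) * (-(b*c)) = (a*c) * b^2 := by ring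
    rw [h4, map_mul, quadraticChar_sq_one' hb, mul_one] at h3
    have h5 : IsSquare (a*c) :=
      (quadraticChar_one_iff_isSquare (mul_ne_zero ha hc)).mp h3
    have : γ = (a*c) * (a⁻¹)^2 := by
      field_simp [hγ]
      rw [hγ, mul_assoc, inv_mul_cancel₀ ha, mul_one]
    rw [this]
    exact h5.mul ⟨a⁻¹, (sq a⁻¹)⟩
  obtain ⟨x, y, hx, hy, hx0, hy0, hd⟩ := exists_nonsquare_sum_of_squares p hp hp2
  set d := x + y with hdd
  have hd0 : d ≠ 0 := fun h0 => hd (h0 ▸ ⟨0, by simp⟩)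
  -- t₀ = d * (-β)⁻¹ is a nonzero square
  have htsq : IsSquare (d * (-β)⁻¹) := by
    have h1 : quadraticChar (ZMod p) d = -1 := quadraticChar_neg_one_iff_not_isSquare.mpr hd
    have h2 : quadraticChar (ZMod p) (-β) = -1 := quadraticChar_neg_one_iff_not_isSquare.mpr hnβ
    have h3 : quadraticChar (ZMod p) (d * (-β)) = 1 := by rw [map_mul, h1, h2]; ring
    have h4 : IsSquare (d * (-β)) :=
      (quadraticChar_one_iff_isSquare (mul_ne_zero hd0 (neg_ne_zero.mpr hβ0))).mp h3
    have hne : (-β) ≠ 0 := neg_ne_zero.mpr hβ0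
    have : d * (-β)⁻¹ = (d * (-β)) * ((-β)⁻¹)^2 := by
      calc d * (-β)⁻¹ = d * 1 * (-β)⁻¹ := by ring
        _ = d * ((-β) * (-β)⁻¹) * (-β)⁻¹ := by rw [mul_inv_cancel₀ hne]
        _ = (d * (-β)) * ((-β)⁻¹)^2 := by ring
    rw [this]
    exact h4.mul ⟨(-β)⁻¹, (sq _)⟩
  refine ⟨x, d * (-β)⁻¹, y * γ⁻¹, hx0, ?_, ?_, hx, htsq, hy.mul hγsq.inv, ?_⟩
  · exact mul_ne_zero hd0 (inv_ne_zero (neg_ne_zero.mpr hβ0))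
  · exact mul_ne_zero hy0 (inv_ne_zero hγ0)
  · have hba : b = β * a := by rw [hβ, mul_assoc, inv_mul_cancel₀ ha, mul_one]
    have hca : c = γ * a := by rw [hγ, mul_assoc, inv_mul_cancel₀ ha, mul_one]
    have hne : (-β) ≠ 0 := neg_ne_zero.mpr hβ0
    have h1 : (d * (-β)⁻¹) * b = -d * a := by
      rw [hba]
      calc d * (-β)⁻¹ * (β * a) = d * ((-β)⁻¹ * ((-β) * (-1))) * a := by ring
        _ = d * (-1) * a := by rw [inv_mul_cancel_left₀ hne]
        _ = -d * a := by ring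
    have h2 : (y * γ⁻¹) * c = y * a := by
      rw [hca]
      calc y * γ⁻¹ * (γ * a) = y * (γ⁻¹ * γ) * a := by ring
        _ = y * a := by rw [inv_mul_cancel₀ hγ0, mul_one]
    calc x*a + (d * (-β)⁻¹)*b + (y * γ⁻¹)*c = x*a + (-d*a) + y*a := by rw [h1, h2]
      _ = (x + y - d) * a := by ring
      _ = 0 := by rw [← hdd]; simp

section PP

variable {p e : ℕ}

lemma isUnit_of_cast_ne_zero (hp : p.Prime) (he : 0 < e) (x : ZMod (p^e))
    (h : (ZMod.castHom (dvd_pow_self p he.ne') (ZMod p)) x ≠ 0) : IsUnit x := by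
  haveI : Fact p.Prime := ⟨hp⟩
  haveI : NeZero (p ^ e) := ⟨pow_ne_zero e hp.pos.ne'⟩
  have hx : ((x.val : ℕ) : ZMod (p^e)) = x := ZMod.natCast_rightInverse x
  rw [← hx]
  rw [ZMod.isUnit_iff_coprime]
  apply Nat.Coprime.pow_right
  rw [Nat.coprime_comm, hp.coprime_iff_not_dvd]
  intro hdvd
  apply h
  rw [← hx, map_natCast]
  exact (ZMod.natCast_eq_zero_iff _ _).mpr hdvd

lemma dvd_val_of_not_isUnit (hp : p.Prime) (he : 0 < e) (x : ZMod (p^e))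
    (h : ¬ IsUnit x) : p ∣ x.val := by
  haveI : Fact p.Prime := ⟨hp⟩
  haveI : NeZero (p ^ e) := ⟨pow_ne_zero e hp.pos.ne'⟩
  by_contra hdvd
  apply h
  have hx : ((x.val : ℕ) : ZMod (p^e)) = x := ZMod.natCast_rightInverse x
  rw [← hx, ZMod.isUnit_iff_coprime]
  exact Nat.Coprime.pow_right _ (hp.coprime_iff_not_dvd.mpr hdvd).symm

lemma single_pp (hp : p.Prime) (he : Odd e) (a : ZMod (p^e)) (h : ¬ IsUnit a) :
    ∃ s : ZMod (p^e), s ≠ 0 ∧ IsSquare s ∧ s * a = 0 := by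
  haveI : Fact p.Prime := ⟨hp⟩
  haveI : NeZero (p ^ e) := ⟨pow_ne_zero e hp.pos.ne'⟩
  have he0 : 0 < e := he.pos
  refine ⟨((p^(e-1) : ℕ) : ZMod (p^e)), ?_, ?_, ?_⟩
  · rw [Ne, ZMod.natCast_eq_zero_iff]
    rw [Nat.pow_dvd_pow_iff_le_right hp.one_lt]
    omega
  · refine ⟨((p^((e-1)/2) : ℕ) : ZMod (p^e)), ?_⟩
    rw [← Nat.cast_mul, ← pow_add]
    congr 2
    obtain ⟨k, hk⟩ := he
    omega
  · obtain ⟨k, hk⟩ := dvd_val_of_not_isUnit hp he0 a h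
    have hx : ((a.val : ℕ) : ZMod (p^e)) = a := ZMod.natCast_rightInverse a
    rw [← hx, hk]
    push_cast
    rw [← mul_assoc, ← pow_succ]
    have h1 : e - 1 + 1 = e := by omega
    rw [h1, ← Nat.cast_pow, ZMod.natCast_self, zero_mul]

end PP

lemma main_pp {p e : ℕ} (hp : p.Prime) (hp2 : p ≠ 2) (he : Odd e) (a b c : ZMod (p^e)) :
    (∃ s : ZMod (p^e), s ≠ 0 ∧ IsSquare s ∧ s * a = 0) ∨
    (∃ s : ZMod (p^e), s ≠ 0 ∧ IsSquare s ∧ s * b = 0) ∨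
    (∃ s : ZMod (p^e), s ≠ 0 ∧ IsSquare s ∧ s * c = 0) ∨
    (∃ s t : ZMod (p^e), s ≠ 0 ∧ IsSquare s ∧ t ≠ 0 ∧ IsSquare t ∧ s * a + t * b = 0) ∨
    (∃ t u : ZMod (p^e), t ≠ 0 ∧ IsSquare t ∧ u ≠ 0 ∧ IsSquare u ∧ t * b + u * c = 0) ∨
    (∃ s t u : ZMod (p^e), s ≠ 0 ∧ IsSquare s ∧ t ≠ 0 ∧ IsSquare t ∧ u ≠ 0 ∧ IsSquare u ∧
      s * a + t * b + u * c = 0) := by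
  haveI : Fact p.Prime := ⟨hp⟩
  haveI : NeZero (p ^ e) := ⟨pow_ne_zero e hp.pos.ne'⟩
  haveI : Fact (1 < p ^ e) := ⟨Nat.one_lt_pow he.pos.ne' hp.one_lt⟩
  have he0 : 0 < e := he.pos
  set φ := ZMod.castHom (dvd_pow_self p he0.ne') (ZMod p) with hφ
  by_cases hua : IsUnit a
  swap
  · exact Or.inl (single_pp hp he a hua)
  by_cases hub : IsUnit b
  swap
  · exact Or.inr (Or.inl (single_pp hp he b hub))
  by_cases huc : IsUnit c
  swap
  · exact Or.inr (Or.inr (Or.inl (single_pp hp he c huc)))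
  have hφa : φ a ≠ 0 := (hua.map φ).ne_zero
  have hφb : φ b ≠ 0 := (hub.map φ).ne_zero
  have hφc : φ c ≠ 0 := (huc.map φ).ne_zero
  by_cases h1 : IsSquare (-(φ a * φ b))
  · -- pair (a, b)
    set binv := ((hub.unit⁻¹ : (ZMod (p^e))ˣ) : ZMod (p^e)) with hbinv
    have hbb : binv * b = 1 := hub.val_inv_mul
    set t := -(a * binv) with ht
    have htu : IsUnit t := (hua.mul hub.unit⁻¹.isUnit).neg
    have hφbb : φ binv * φ b = 1 := by rw [← map_mul, hbb, map_one]
    have htsq : IsSquare t := by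
      apply isSquare_of_isSquare_cast hp hp2 he0 t htu
      have : φ t = (-(φ a * φ b)) * (φ binv * φ binv) := by
        rw [ht, map_neg, map_mul]
        calc -(φ a * φ binv) = -(φ a * (φ binv * φ b) * φ binv) := by
              rw [hφbb, mul_one]
          _ = -(φ a * φ b) * (φ binv * φ binv) := by ring
      rw [this]
      exact h1.mul ⟨φ binv, rfl⟩
    refine Or.inr (Or.inr (Or.inr (Or.inl ⟨1, t, one_ne_zero, IsSquare.one, htu.ne_zero, htsq, ?_⟩)))
    rw [ht, one_mul]
    calc a + -(a * binv) * b = a - a * (binv * b) := by ring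
      _ = 0 := by rw [hbb, mul_one, sub_self]
  by_cases h2 : IsSquare (-(φ b * φ c))
  · -- pair (b, c)
    set cinv := ((huc.unit⁻¹ : (ZMod (p^e))ˣ) : ZMod (p^e)) with hcinv
    have hcc : cinv * c = 1 := huc.val_inv_mul
    set u := -(b * cinv) with hu
    have huu : IsUnit u := (hub.mul huc.unit⁻¹.isUnit).neg
    have hφcc : φ cinv * φ c = 1 := by rw [← map_mul, hcc, map_one]
    have husq : IsSquare u := by
      apply isSquare_of_isSquare_cast hp hp2 he0 u huu
      have : φ u = (-(φ b * φ c)) * (φ cinv * φ cinv) := by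
        rw [hu, map_neg, map_mul]
        calc -(φ b * φ cinv) = -(φ b * (φ cinv * φ c) * φ cinv) := by
              rw [hφcc, mul_one]
          _ = -(φ b * φ c) * (φ cinv * φ cinv) := by ring
      rw [this]
      exact h2.mul ⟨φ cinv, rfl⟩
    refine Or.inr (Or.inr (Or.inr (Or.inr (Or.inl
      ⟨1, u, one_ne_zero, IsSquare.one, huu.ne_zero, husq, ?_⟩))))
    rw [hu, one_mul]
    calc b + -(b * cinv) * c = b - b * (cinv * c) := by ring
      _ = 0 := by rw [hcc, mul_one, sub_self]
  -- triple
  obtain ⟨s₀, t₀, u₀, hs0, ht0, hu0, hs0sq, ht0sq, hu0sq, heq⟩ :=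
    core_modp p hp hp2 (φ a) (φ b) (φ c) hφa hφb hφc h1 h2
  obtain ⟨r, hr⟩ := ht0sq
  obtain ⟨r', hr'⟩ := hu0sq
  set R := ((r.val : ℕ) : ZMod (p^e)) with hR
  set R' := ((r'.val : ℕ) : ZMod (p^e)) with hR'
  have hφR : φ R = r := by rw [hR, map_natCast]; exact ZMod.natCast_rightInverse r
  have hφR' : φ R' = r' := by rw [hR', map_natCast]; exact ZMod.natCast_rightInverse r'
  set ainv := ((hua.unit⁻¹ : (ZMod (p^e))ˣ) : ZMod (p^e)) with hainv
  have haa : ainv * a = 1 := hua.val_inv_mul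
  have hφT : φ (R * R) = t₀ := by rw [map_mul, hφR, ← hr]
  have hφU : φ (R' * R') = u₀ := by rw [map_mul, hφR', ← hr']
  have hT0 : (R * R : ZMod (p^e)) ≠ 0 := fun h0 => ht0 (by rw [← hφT, h0, map_zero])
  have hU0 : (R' * R' : ZMod (p^e)) ≠ 0 := fun h0 => hu0 (by rw [← hφU, h0, map_zero])
  set S := -(R * R * b + R' * R' * c) * ainv with hS
  have hSa : S * a = -(R * R * b + R' * R' * c) := by
    rw [hS, mul_assoc, haa, mul_one]
  have hφS : φ S = s₀ := by
    have h3 : φ S * φ a = s₀ * φ a := by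
      rw [← map_mul, hSa]
      simp only [map_neg, map_add, map_mul, hφR, hφR']
      rw [← hr, ← hr']
      linear_combination -heq
    exact mul_right_cancel₀ hφa h3
  have hS0 : S ≠ 0 := fun h0 => hs0 (by rw [← hφS, h0, map_zero])
  have hSsq : IsSquare S := by
    apply isSquare_of_isSquare_cast hp hp2 he0 S
    · exact isUnit_of_cast_ne_zero hp he0 S (by rw [hφS]; exact hs0)
    · rw [hφS]; exact hs0sq
  refine Or.inr (Or.inr (Or.inr (Or.inr (Or.inr
    ⟨S, R * R, R' * R', hS0, hSsq, hT0, ⟨R, rfl⟩, hU0, ⟨R', rfl⟩, ?_⟩))))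
  rw [hSa]
  ring

lemma membership3 (p e m : ℕ) (hp : p.Prime) (hp2 : p ≠ 2) (he : Odd e)
    (hco : (p^e).Coprime m) (x : Fin 3 → ZMod (p^e * m)) :
    HasConsecWZS (nonzeroSquares (p^e * m)) x := by
  set ψ := ZMod.chineseRemainder hco with hψ
  set L : ZMod (p^e) → ZMod (p^e * m) := fun z => ψ.symm (z, 0) with hL
  have hLne : ∀ z : ZMod (p^e), z ≠ 0 → L z ≠ 0 := by
    intro z hz h0
    apply hz
    have h1 : ψ.symm (z, 0) = ψ.symm 0 := by rw [map_zero]; exact h0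
    have h2 := ψ.symm.injective h1
    exact congrArg Prod.fst h2
  have hLmem : ∀ z : ZMod (p^e), z ≠ 0 → IsSquare z →
      L z ∈ nonzeroSquares (p^e * m) := by
    intro z hz ⟨y, hy⟩
    refine ⟨hLne z hz, L y, ?_⟩
    rw [hL]
    simp only
    rw [sq, ← map_mul]
    congr 1
    rw [Prod.mk_mul_mk, mul_zero, ← hy]
  have hLmul : ∀ (z : ZMod (p^e)) (v : ZMod (p^e * m)),
      L z * v = L (z * (ψ v).1) := by
    intro z v
    apply ψ.injective
    rw [map_mul, hL]
    simp only
    rw [RingEquiv.apply_symm_apply, RingEquiv.apply_symm_apply, Prod.mk_mul_mk, zero_mul]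
  have hLadd : ∀ z z' : ZMod (p^e), L z + L z' = L (z + z') := by
    intro z z'
    rw [hL]
    simp only
    rw [← map_add, Prod.mk_add_mk, add_zero]
  have hL0 : L 0 = 0 := by rw [hL]; simp only; rw [Prod.mk_zero_zero, map_zero]
  set a := (ψ (x 0)).1
  set b := (ψ (x 1)).1
  set c := (ψ (x 2)).1
  have hIcc00 : Finset.Icc (0 : Fin 3) 0 = {0} := by decide
  have hIcc11 : Finset.Icc (1 : Fin 3) 1 = {1} := by decide
  have hIcc22 : Finset.Icc (2 : Fin 3) 2 = {2} := by decide
  have hIcc01 : Finset.Icc (0 : Fin 3) 1 = {0, 1} := by decide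
  have hIcc12 : Finset.Icc (1 : Fin 3) 2 = {1, 2} := by decide
  have hIcc02 : Finset.Icc (0 : Fin 3) 2 = {0, 1, 2} := by decide
  rcases main_pp hp hp2 he a b c with ⟨s, h0, hsq, heq⟩ | ⟨s, h0, hsq, heq⟩ |
    ⟨s, h0, hsq, heq⟩ | ⟨s, t, hs0, hssq, ht0, htsq, heq⟩ |
    ⟨t, u, ht0, htsq, hu0, husq, heq⟩ | ⟨s, t, u, hs0, hssq, ht0, htsq, hu0, husq, heq⟩
  · refine ⟨0, 0, le_refl _, fun _ => L s, ?_, ?_⟩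
    · rw [hIcc00]; intro t ht; rw [Finset.mem_singleton] at ht; subst ht
      exact hLmem s h0 hsq
    · rw [hIcc00, Finset.sum_singleton, hLmul, heq, hL0]
  · refine ⟨1, 1, le_refl _, fun _ => L s, ?_, ?_⟩
    · rw [hIcc11]; intro t ht; rw [Finset.mem_singleton] at ht; subst ht
      exact hLmem s h0 hsq
    · rw [hIcc11, Finset.sum_singleton, hLmul, heq, hL0]
  · refine ⟨2, 2, le_refl _, fun _ => L s, ?_, ?_⟩
    · rw [hIcc22]; intro t ht; rw [Finset.mem_singleton] at ht; subst ht
      exact hLmem s h0 hsq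
    · rw [hIcc22, Finset.sum_singleton, hLmul, heq, hL0]
  · refine ⟨0, 1, by decide, ![L s, L t, 0], ?_, ?_⟩
    · rw [hIcc01]
      intro r hr
      fin_cases hr
      · exact hLmem s hs0 hssq
      · exact hLmem t ht0 htsq
    · rw [hIcc01, Finset.sum_insert (by decide), Finset.sum_singleton]
      show L s * x 0 + L t * x 1 = 0
      rw [hLmul, hLmul, hLadd, heq, hL0]
  · refine ⟨1, 2, by decide, ![0, L t, L u], ?_, ?_⟩
    · rw [hIcc12]
      intro r hr
      fin_cases hr
      · exact hLmem t ht0 htsq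
      · exact hLmem u hu0 husq
    · rw [hIcc12, Finset.sum_insert (by decide), Finset.sum_singleton]
      show L t * x 1 + L u * x 2 = 0
      rw [hLmul, hLmul, hLadd, heq, hL0]
  · refine ⟨0, 2, by decide, ![L s, L t, L u], ?_, ?_⟩
    · rw [hIcc02]
      intro r hr
      fin_cases hr
      · exact hLmem s hs0 hssq
      · exact hLmem t ht0 htsq
      · exact hLmem u hu0 husq
    · rw [hIcc02, Finset.sum_insert (by decide), Finset.sum_insert (by decide),
        Finset.sum_singleton]
      show L s * x 0 + (L t * x 1 + L u * x 2) = 0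
      rw [hLmul, hLmul, hLmul, hLadd, hLadd, ← add_assoc (s * a), heq, hL0]


lemma val_force {p : ℕ} (hp : p.Prime) {x y e : ℕ} (hx : x ≠ 0) (hy : y ≠ 0)
    (hne : x.factorization p ≠ y.factorization p) (h : p^e ∣ x + y) :
    p^e ∣ x ∧ p^e ∣ y := by
  wlog hlt : x.factorization p < y.factorization p generalizing x y
  · have hr := this hy hx hne.symm (by rwa [add_comm] at h) (by omega)
    exact ⟨hr.2, hr.1⟩
  by_cases hle : e ≤ x.factorization p
  · exact ⟨(Nat.Prime.pow_dvd_iff_le_factorization hp hx).mpr hle,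
      (Nat.Prime.pow_dvd_iff_le_factorization hp hy).mpr (by omega)⟩
  · exfalso
    push_neg at hle
    set k := x.factorization p with hk
    have h1 : p^(k+1) ∣ y := (Nat.Prime.pow_dvd_iff_le_factorization hp hy).mpr (by omega)
    have h2 : p^(k+1) ∣ x + y := dvd_trans (pow_dvd_pow p (by omega)) h
    have h3 : p^(k+1) ∣ x := by
      have := Nat.dvd_sub h2 h1
      simpa using this
    have h4 := (Nat.Prime.pow_dvd_iff_le_factorization hp hx).mp h3
    omega

lemma fact_sq {p : ℕ} (w : ℕ) : (w^2).factorization p = 2 * w.factorization p := by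
  rw [Nat.factorization_pow]
  simp

lemma force_unit {p e C : ℕ} (hp : p.Prime) (he : 0 < e) (hC : ¬ p ∣ C)
    (hns : ¬ IsSquare (-(C : ZMod p))) (w v : ℕ) (h : p^e ∣ w^2 + v^2 * C) :
    p^e ∣ w^2 ∧ p^e ∣ v^2 := by
  haveI : Fact p.Prime := ⟨hp⟩
  have hCp : (p^e).Coprime C := Nat.Coprime.pow_left _ (hp.coprime_iff_not_dvd.mpr hC)
  have hC0 : C ≠ 0 := fun h0 => hC (h0 ▸ dvd_zero p)
  rcases eq_or_ne v 0 with rfl | hv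
  · constructor
    · simpa using h
    · simp
  rcases eq_or_ne w 0 with rfl | hw
  · refine ⟨by simp, hCp.dvd_of_dvd_mul_right ?_⟩
    simpa using h
  set i := w.factorization p with hi
  set j := v.factorization p with hj
  have hw2 : (w^2).factorization p = 2*i := fact_sq w
  have hv2C : (v^2*C).factorization p = 2*j := by
    rw [Nat.factorization_mul (pow_ne_zero 2 hv) hC0, Finsupp.add_apply, fact_sq,
      Nat.factorization_eq_zero_of_not_dvd hC, add_zero]
  rcases eq_or_ne i j with hij | hij
  · by_cases h2i : e ≤ 2*i
    · exact ⟨(Nat.Prime.pow_dvd_iff_le_factorization hp (pow_ne_zero 2 hw)).mpr (by omega),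
        (Nat.Prime.pow_dvd_iff_le_factorization hp (pow_ne_zero 2 hv)).mpr
          (by rw [fact_sq]; omega)⟩
    · exfalso
      push_neg at h2i
      set w₁ := ordCompl[p] w with hw₁
      set v₁ := ordCompl[p] v with hv₁
      have hw1d : ¬ p ∣ w₁ := Nat.not_dvd_ordCompl hp hw
      have hv1d : ¬ p ∣ v₁ := Nat.not_dvd_ordCompl hp hv
      have e1 : w = p^i * w₁ := (Nat.ordProj_mul_ordCompl_eq_self w p).symm
      have e2 : v = p^i * v₁ := by
        rw [hij]; exact (Nat.ordProj_mul_ordCompl_eq_self v p).symm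
      have key : w^2 + v^2*C = p^(2*i) * (w₁^2 + v₁^2*C) := by
        rw [e1, e2, mul_pow, mul_pow, ← pow_mul]
        ring
      rw [key] at h
      have h5 : p^(2*i) * p^(e - 2*i) ∣ p^(2*i) * (w₁^2 + v₁^2*C) := by
        rw [← pow_add]
        have : 2*i + (e - 2*i) = e := by omega
        rw [this]
        exact h
      have h6 : p^(e-2*i) ∣ w₁^2 + v₁^2*C :=
        (mul_dvd_mul_iff_left (a := p^(2*i)) (pow_ne_zero _ hp.pos.ne')).mp h5
      have h7 : p ∣ w₁^2 + v₁^2*C :=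
        dvd_trans (dvd_pow_self p (by omega)) h6
      have h8 : ((w₁^2 + v₁^2*C : ℕ) : ZMod p) = 0 :=
        (ZMod.natCast_eq_zero_iff _ _).mpr h7
      push_cast at h8
      have hv1z : (v₁ : ZMod p) ≠ 0 := by
        rw [Ne, ZMod.natCast_eq_zero_iff]
        exact hv1d
      apply hns
      refine ⟨(w₁ : ZMod p) * (v₁ : ZMod p)⁻¹, ?_⟩
      have hvv : (v₁ : ZMod p) * (v₁ : ZMod p)⁻¹ = 1 := mul_inv_cancel₀ hv1z
      field_simp
      linear_combination -h8
  · have h9 := val_force hp (pow_ne_zero 2 hw) (mul_ne_zero (pow_ne_zero 2 hv) hC0)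
      (by rw [hw2, hv2C]; omega) h
    exact ⟨h9.1, hCp.dvd_of_dvd_mul_right h9.2⟩

lemma force_p {p e : ℕ} (hp : p.Prime) (he : 0 < e) (hee : Even e) (w v : ℕ)
    (h : p^e ∣ w^2 + v^2 * p) : p^e ∣ w^2 ∧ p^e ∣ v^2 := by
  rcases eq_or_ne v 0 with rfl | hv
  · constructor
    · simpa using h
    · simp
  have hval : (v^2*p).factorization p = 2 * v.factorization p + 1 := by
    rw [Nat.factorization_mul (pow_ne_zero 2 hv) hp.pos.ne', Finsupp.add_apply, fact_sq,
      hp.factorization_self]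
  have hstep : p^e ∣ v^2*p → p^e ∣ v^2 := by
    intro hd
    have := (Nat.Prime.pow_dvd_iff_le_factorization hp
      (mul_ne_zero (pow_ne_zero 2 hv) hp.pos.ne')).mp hd
    rw [hval] at this
    obtain ⟨r, hr⟩ := hee
    refine (Nat.Prime.pow_dvd_iff_le_factorization hp (pow_ne_zero 2 hv)).mpr ?_
    rw [fact_sq]
    omega
  rcases eq_or_ne w 0 with rfl | hw
  · refine ⟨by simp, hstep ?_⟩
    simpa using h
  have h9 := val_force hp (pow_ne_zero 2 hw) (mul_ne_zero (pow_ne_zero 2 hv) hp.pos.ne')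
    (by rw [hval, fact_sq]; omega) h
  exact ⟨h9.1, hstep h9.2⟩

lemma dvd_of_all_prime_pow {n v : ℕ} (hn : n ≠ 0)
    (h : ∀ p ∈ n.primeFactors, p^(n.factorization p) ∣ v) : n ∣ v := by
  rcases eq_or_ne v 0 with rfl | hv
  · exact dvd_zero n
  rw [← Nat.factorization_le_iff_dvd hn hv]
  intro p
  by_cases hps : p ∈ n.primeFactors
  · exact (Nat.Prime.pow_dvd_iff_le_factorization (Nat.prime_of_mem_primeFactors hps) hv).mp
      (h p hps)
  · have : n.factorization p = 0 := by
      rw [← Nat.support_factorization] at hps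
      exact Finsupp.notMem_support_iff.mp hps
    simp [this]

def GOODa (n p a : ℕ) : Prop :=
  ∀ W Y : ℕ,
    (p^(n.factorization p) ∣ W^2 + Y^2*a →
      p^(n.factorization p) ∣ W^2 ∧ p^(n.factorization p) ∣ Y^2) ∧
    (p^(n.factorization p) ∣ Y^2*a → p^(n.factorization p) ∣ Y^2)

lemma good_choice (n : ℕ) (hn : 0 < n) (hv : Even (n.factorization 2)) :
    ∀ p ∈ n.primeFactors, ∃ a, GOODa n p a := by
  intro p hps
  have hp : p.Prime := Nat.prime_of_mem_primeFactors hps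
  haveI : Fact p.Prime := ⟨hp⟩
  have hep : n.factorization p ≠ 0 := by
    rw [← Nat.support_factorization] at hps
    exact Finsupp.mem_support_iff.mp hps
  have he0 : 0 < n.factorization p := Nat.pos_of_ne_zero hep
  rcases Nat.even_or_odd (n.factorization p) with hee | hoo
  · refine ⟨p, fun W Y => ⟨fun h => force_p hp he0 hee W Y h, fun h => ?_⟩⟩
    exact (force_p hp he0 hee 0 Y (by simpa using h)).2
  · have hp2 : p ≠ 2 := by
      intro h2
      rw [h2] at hoo
      rw [← Nat.not_even_iff_odd] at hoo
      exact hoo hv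
    obtain ⟨ν, hν⟩ := FiniteField.exists_nonsquare
      (F := ZMod p) (by rw [ZMod.ringChar_zmod_n]; exact hp2)
    have hν0 : ν ≠ 0 := fun h0 => hν (h0 ▸ ⟨0, by simp⟩)
    have hνval : ν.val ≠ 0 := fun h0 => hν0 (by
      have := ZMod.natCast_rightInverse (n := p) ν
      rw [← this, h0, Nat.cast_zero])
    have hνlt : ν.val < p := ZMod.val_lt ν
    set a := p - ν.val with ha
    have hpa : ¬ p ∣ a := by
      intro hd
      have h1 : 0 < a := by omega
      have h2 : a < p := by omega
      have := Nat.le_of_dvd h1 hd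
      omega
    have hcast : ((a : ℕ) : ZMod p) = -ν := by
      rw [ha, Nat.cast_sub (by omega)]
      rw [ZMod.natCast_self, ZMod.natCast_rightInverse ν]
      ring
    have hns : ¬ IsSquare (-((a : ℕ) : ZMod p)) := by
      rw [hcast, neg_neg]
      exact hν
    refine ⟨a, fun W Y => ⟨fun h => force_unit hp he0 hpa hns W Y h, fun h => ?_⟩⟩
    have hCp : (p^(n.factorization p)).Coprime a :=
      Nat.Coprime.pow_left _ (hp.coprime_iff_not_dvd.mpr hpa)
    exact hCp.dvd_of_dvd_mul_right h

lemma lower2 (n : ℕ) (hn : 0 < n) (hv : Even (n.factorization 2)) :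
    ∃ c : ZMod n, ∀ s t : ZMod n,
      (s ≠ 0 ∧ ∃ y : ZMod n, y ^ 2 = s) → (t ≠ 0 ∧ ∃ y : ZMod n, y ^ 2 = t) →
      t * c ≠ 0 ∧ s + t * c ≠ 0 := by
  haveI : NeZero n := ⟨hn.ne'⟩
  choose A hA using good_choice n hn hv
  have hs0 : ∀ p ∈ n.primeFactors, p^(n.factorization p) ≠ 0 := by
    intro p hps
    exact pow_ne_zero _ (Nat.prime_of_mem_primeFactors hps).pos.ne'
  have hpair : Set.Pairwise ↑(n.primeFactors)
      (Function.onFun Nat.Coprime fun p => p^(n.factorization p)) := by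
    intro p hps q hqs hne
    exact Nat.coprime_pow_primes _ _ (Nat.prime_of_mem_primeFactors hps)
      (Nat.prime_of_mem_primeFactors hqs) hne
  set A' : ℕ → ℕ := fun p => if h : p ∈ n.primeFactors then A p h else 0 with hA'
  have hAgood : ∀ p ∈ n.primeFactors, GOODa n p (A' p) := by
    intro p hps
    rw [hA']
    simp only [dif_pos hps]
    exact hA p hps
  set k := Nat.chineseRemainderOfFinset A'
    (fun p => p^(n.factorization p)) n.primeFactors hs0 hpair with hk
  have hkp : ∀ p ∈ n.primeFactors, (k : ℕ) ≡ A' p [MOD p^(n.factorization p)] := k.prop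
  refine ⟨((k : ℕ) : ZMod n), ?_⟩
  rintro s t ⟨hs0', zs, hzs⟩ ⟨ht0', zt, hzt⟩
  set W := zs.val with hW
  set Y := zt.val with hY
  have hsW : s = ((W^2 : ℕ) : ZMod n) := by
    rw [← hzs]
    push_cast
    rw [ZMod.natCast_rightInverse zs]
  have htY : t = ((Y^2 : ℕ) : ZMod n) := by
    rw [← hzt]
    push_cast
    rw [ZMod.natCast_rightInverse zt]
  have keyY : (∀ p ∈ n.primeFactors, p^(n.factorization p) ∣ Y^2*(k:ℕ)) → t = 0 := by
    intro hall
    rw [htY, ZMod.natCast_eq_zero_iff]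
    apply dvd_of_all_prime_pow hn.ne'
    intro p hps
    have h1 : Y^2 * A' p ≡ Y^2 * (k:ℕ) [MOD p^(n.factorization p)] :=
      ((hkp p hps).symm).mul_left _
    have h2 : p^(n.factorization p) ∣ Y^2 * A' p :=
      Nat.modEq_zero_iff_dvd.mp (h1.trans (Nat.modEq_zero_iff_dvd.mpr (hall p hps)))
    exact ((hAgood p hps) 0 Y).2 h2
  constructor
  · intro h0
    have hd : n ∣ Y^2*(k:ℕ) := by
      rw [htY] at h0
      rw [← ZMod.natCast_eq_zero_iff]
      push_cast
      push_cast at h0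
      exact h0
    exact ht0' (keyY (fun p hps => dvd_trans (Nat.ordProj_dvd n p) hd))
  · intro h0
    have hd : n ∣ W^2 + Y^2*(k:ℕ) := by
      rw [← ZMod.natCast_eq_zero_iff]
      push_cast
      push_cast at h0
      rw [hsW, htY] at h0
      push_cast at h0
      exact h0
    have hWY : ∀ p ∈ n.primeFactors,
        p^(n.factorization p) ∣ W^2 ∧ p^(n.factorization p) ∣ Y^2 := by
      intro p hps
      have hq : p^(n.factorization p) ∣ W^2 + Y^2*(k:ℕ) :=
        dvd_trans (Nat.ordProj_dvd n p) hd
      have h1 : W^2 + Y^2 * A' p ≡ W^2 + Y^2 * (k:ℕ) [MOD p^(n.factorization p)] :=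
        (((hkp p hps).symm).mul_left _).add_left _
      have h2 : p^(n.factorization p) ∣ W^2 + Y^2 * A' p :=
        Nat.modEq_zero_iff_dvd.mp (h1.trans (Nat.modEq_zero_iff_dvd.mpr hq))
      exact ((hAgood p hps) W Y).1 h2
    apply hs0'
    rw [hsW, ZMod.natCast_eq_zero_iff]
    exact dvd_of_all_prime_pow hn.ne' (fun p hps => (hWY p hps).1)


lemma consec_sub {n k : ℕ} {A : Set (ZMod n)} {x : Fin k → ZMod n}
    (h : HasConsecWZS A x) : HasWZSSubseq A x := by
  obtain ⟨i, j, hij, w, hw, hs⟩ := h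
  exact ⟨Finset.Icc i j, Finset.nonempty_Icc.mpr hij, w, hw, hs⟩

theorem stmt16 (n : ℕ) (hn : 0 < n) (hns : ¬ IsSquare n)
    (hv : Even (n.factorization 2)) :
    IsLeast {k | DConst n (nonzeroSquares n) k} 3 ∧
    IsLeast {k | CConst n (nonzeroSquares n) k} 3 := by
  haveI : NeZero n := ⟨hn.ne'⟩
  obtain ⟨p, hp, hp2, hode⟩ := exists_odd_prime_odd_fact n hn hns hv
  have hm' : n = p ^ (n.factorization p) * ordCompl[p] n :=
    (Nat.ordProj_mul_ordCompl_eq_self n p).symm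
  have hco : (p ^ (n.factorization p)).Coprime (ordCompl[p] n) :=
    Nat.Coprime.pow_left _ (Nat.coprime_ordCompl hp hn.ne')
  have key : ∀ x : Fin 3 → ZMod n, HasConsecWZS (nonzeroSquares n) x := by
    rw [hm']
    intro x
    exact membership3 p _ _ hp hp2 hode hco x
  -- bad sequence of length 1
  have bad1 : ¬ HasWZSSubseq (nonzeroSquares n) ![(1 : ZMod n)] := by
    rintro ⟨I, hIne, w, hw, hsum⟩
    have h0 : (0 : Fin 1) ∈ I := by
      obtain ⟨j, hj⟩ := hIne
      rwa [Subsingleton.elim j 0] at hj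
    have hIeq : I = {0} :=
      Finset.eq_singleton_iff_unique_mem.mpr ⟨h0, fun j _ => Subsingleton.elim j 0⟩
    rw [hIeq, Finset.sum_singleton] at hsum
    simp only [Matrix.cons_val_zero, mul_one] at hsum
    exact (hw 0 h0).1 hsum
  -- bad sequence of length 2
  obtain ⟨c, hc⟩ := lower2 n hn hv
  have bad2 : ¬ HasWZSSubseq (nonzeroSquares n) ![(1 : ZMod n), c] := by
    rintro ⟨I, hIne, w, hw, hsum⟩
    by_cases h0 : (0 : Fin 2) ∈ I <;> by_cases h1 : (1 : Fin 2) ∈ I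
    · have hIeq : I = {0, 1} := by
        ext i
        fin_cases i <;> simp [h0, h1]
      rw [hIeq, Finset.sum_insert (by decide), Finset.sum_singleton] at hsum
      simp only [Matrix.cons_val_zero, Matrix.cons_val_one, Matrix.head_cons, mul_one] at hsum
      exact ((hc (w 0) (w 1) (hw 0 h0) (hw 1 h1)).2) hsum
    · have hIeq : I = {0} := by
        ext i
        fin_cases i <;> simp [h0, h1]
      rw [hIeq, Finset.sum_singleton] at hsum
      simp only [Matrix.cons_val_zero, mul_one] at hsum
      exact (hw 0 h0).1 hsum
    · have hIeq : I = {1} := by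
        ext i
        fin_cases i <;> simp [h0, h1]
      rw [hIeq, Finset.sum_singleton] at hsum
      simp only [Matrix.cons_val_one, Matrix.head_cons] at hsum
      exact ((hc (w 1) (w 1) (hw 1 h1) (hw 1 h1)).1) hsum
    · obtain ⟨j, hj⟩ := hIne
      fin_cases j
      · exact h0 hj
      · exact h1 hj
  have lbD : ∀ k ∈ {k | DConst n (nonzeroSquares n) k}, 3 ≤ k := by
    rintro k ⟨hk0, hkall⟩
    by_contra hlt
    push_neg at hlt
    interval_cases k
    · exact bad1 (hkall ![1])
    · exact bad2 (hkall ![1, c])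
  constructor
  · exact ⟨⟨by norm_num, fun x => consec_sub (key x)⟩, lbD⟩
  · refine ⟨⟨by norm_num, key⟩, ?_⟩
    rintro k ⟨hk0, hkall⟩
    exact lbD k ⟨hk0, fun x => consec_sub (hkall x)⟩
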